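/- Let 𝒜 be an abelian length category, 𝒰 a torsion class, S ∈ 𝒰^⊥ a brick, and 𝒯 := T(𝒰 ∪ {S}) the smallest torsion class containing 𝒰 and S. Then every morphism f : X → S with X ∈ 𝒯 is zero or an epimorphism, and ker f ∈ 𝒯. Consequently S is a simple object of the left wide subcategory W_L(𝒯). -/

import Mathlib

open CategoryTheory CategoryTheory.Limits

universe v u

attribute [local instance] CategoryTheory.Abelian.hasFiniteBiproducts

variable (C : Type u) [Category.{v} C] [Abelian C]

/-- The right Hom-perpendicular category of a class of objects. -/
def RPerp (X : Set C) : Set C := {Y | ∀ A ∈ X, ∀ f : A ⟶ Y, f = 0}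

/-- The left Hom-perpendicular category of a class of objects. -/
def LPerp (X : Set C) : Set C := {Y | ∀ A ∈ X, ∀ f : Y ⟶ A, f = 0}

/-- A torsion class: a class of objects containing the zero objects and closed under
quotients and extensions. -/
structure IsTorsionClass (T : Set C) : Prop where
  zero_mem : ∀ Z : C, IsZero Z → Z ∈ T
  quot_mem : ∀ ⦃A B : C⦄ (f : A ⟶ B), Epi f → A ∈ T → B ∈ T
  ext_mem : ∀ E : ShortComplex C, E.ShortExact → E.X₁ ∈ T → E.X₃ ∈ T → E.X₂ ∈ T

/-- A torsion-free class: a class of objects containing the zero objects and closed under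
subobjects and extensions. -/
structure IsTorsionFreeClass (F : Set C) : Prop where
  zero_mem : ∀ Z : C, IsZero Z → Z ∈ F
  sub_mem : ∀ ⦃A B : C⦄ (f : A ⟶ B), Mono f → B ∈ F → A ∈ F
  ext_mem : ∀ E : ShortComplex C, E.ShortExact → E.X₁ ∈ F → E.X₃ ∈ F → E.X₂ ∈ F

/-- The smallest torsion class containing a class of objects. -/
def torsClosure (X : Set C) : Set C := ⋂₀ {T | IsTorsionClass C T ∧ X ⊆ T}

/-- The smallest torsion-free class containing a class of objects. -/
def torfClosure (X : Set C) : Set C := ⋂₀ {F | IsTorsionFreeClass C F ∧ X ⊆ F}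

/-- `ExtStar U W` is the class of objects `X` admitting a short exact sequence
`0 → U' → X → W' → 0` with `U' ∈ U` and `W' ∈ W`. -/
def ExtStar (U W : Set C) : Set C :=
  {X | ∃ E : ShortComplex C, E.ShortExact ∧ E.X₁ ∈ U ∧ E.X₃ ∈ W ∧ Nonempty (E.X₂ ≅ X)}

/-- The additive closure of a class of objects: direct summands of finite direct sums. -/
def AddClosure (S : Set C) : Set C :=
  {X | ∃ (n : ℕ) (c : Fin n → C), (∀ i, c i ∈ S) ∧ ∃ f : (⨁ c) ⟶ X, IsSplitEpi f}

/-- Membership in the filtration closure `Filt S`: objects admitting a finite filtration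
with subquotients in `AddClosure S`. -/
inductive FiltMem (S : Set C) : C → Prop
  | of_isZero (X : C) : IsZero X → FiltMem S X
  | ext (E : ShortComplex C) : E.ShortExact → FiltMem S E.X₁ →
      E.X₃ ∈ AddClosure C S → FiltMem S E.X₂
  | of_iso (X Y : C) (e : X ≅ Y) : FiltMem S X → FiltMem S Y

/-- The filtration closure of a class of objects. -/
def Filt (S : Set C) : Set C := {X | FiltMem C S X}

/-- The class of quotients of objects of the additive closure of `S`. -/
def Fac (S : Set C) : Set C := {X | ∃ A ∈ AddClosure C S, ∃ f : A ⟶ X, Epi f}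

/-- The class of subobjects of objects of the additive closure of `S`. -/
def Subm (S : Set C) : Set C := {X | ∃ A ∈ AddClosure C S, ∃ f : X ⟶ A, Mono f}

/-- A wide subcategory: closed under kernels, cokernels and extensions
(and containing the zero objects). -/
structure IsWide (W : Set C) : Prop where
  zero_mem : ∀ Z : C, IsZero Z → Z ∈ W
  ker_mem : ∀ ⦃X Y : C⦄ (f : X ⟶ Y), X ∈ W → Y ∈ W → kernel f ∈ W
  coker_mem : ∀ ⦃X Y : C⦄ (f : X ⟶ Y), X ∈ W → Y ∈ W → cokernel f ∈ W
  ext_mem : ∀ E : ShortComplex C, E.ShortExact → E.X₁ ∈ W → E.X₃ ∈ W → E.X₂ ∈ W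

/-- A brick: a nonzero object all of whose nonzero endomorphisms are invertible
(equivalently, the endomorphism ring is a division ring). -/
def IsBrick (S : C) : Prop := ¬ IsZero S ∧ ∀ f : S ⟶ S, f = 0 ∨ IsIso f

/-- A simple object of the full abelian subcategory determined by a wide subcategory `W`. -/
def IsSimpleIn (W : Set C) (S : C) : Prop :=
  S ∈ W ∧ ¬ IsZero S ∧ ∀ ⦃A : C⦄ (f : A ⟶ S), A ∈ W → Mono f → IsZero A ∨ IsIso f

/-- A Hasse arrow `T → U` in the poset of torsion classes: `U ⊊ T` are adjacent. -/
def IsHasseArrow (T U : Set C) : Prop :=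
  IsTorsionClass C T ∧ IsTorsionClass C U ∧ U ⊂ T ∧
    ∀ V : Set C, IsTorsionClass C V → U ⊆ V → V ⊆ T → V = U ∨ V = T

/-- A Hasse arrow `F → G` in the poset of torsion-free classes: `G ⊊ F` are adjacent. -/
def IsHasseArrowTorf (F G : Set C) : Prop :=
  IsTorsionFreeClass C F ∧ IsTorsionFreeClass C G ∧ G ⊂ F ∧
    ∀ H : Set C, IsTorsionFreeClass C H → G ⊆ H → H ⊆ F → H = G ∨ H = F

/-- The brick label of a Hasse arrow `T → U` of torsion classes:
the unique brick in `U^⊥ ∩ T`. -/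
def IsBrickLabel (T U : Set C) (S : C) : Prop := IsBrick C S ∧ S ∈ RPerp C U ∩ T

/-- The brick label of a Hasse arrow `F → G` of torsion-free classes:
the unique brick in `^⊥G ∩ F`. -/
def IsBrickLabelTorf (F G : Set C) (S : C) : Prop := IsBrick C S ∧ S ∈ LPerp C G ∩ F

/-- The left wide subcategory of a torsion class. -/
def WL (T : Set C) : Set C :=
  {X | X ∈ T ∧ ∀ ⦃Y : C⦄ (g : Y ⟶ X), Y ∈ T → kernel g ∈ T}

/-- The right wide subcategory of a torsion-free class. -/
def WR (F : Set C) : Set C :=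
  {X | X ∈ F ∧ ∀ ⦃Y : C⦄ (f : X ⟶ Y), Y ∈ F → cokernel f ∈ F}

/-- A Serre subcategory of the abelian category given by a wide subcategory `W`:
closed under extensions, subobjects and quotients within `W`. -/
structure IsSerreIn (W S : Set C) : Prop where
  subset : S ⊆ W
  zero_mem : ∀ Z : C, IsZero Z → Z ∈ S
  sub_mem : ∀ ⦃A X : C⦄ (f : A ⟶ X), Mono f → A ∈ W → X ∈ S → A ∈ S
  quot_mem : ∀ ⦃X B : C⦄ (f : X ⟶ B), Epi f → B ∈ W → X ∈ S → B ∈ S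
  ext_mem : ∀ E : ShortComplex C, E.ShortExact → E.X₂ ∈ W →
    E.X₁ ∈ S → E.X₃ ∈ S → E.X₂ ∈ S

/-- A torsion class of the abelian category given by a wide subcategory `W`:
a subclass of `W` containing the zero objects and closed under quotients in `W`
and extensions. -/
structure IsTorsionClassIn (W X : Set C) : Prop where
  subset : X ⊆ W
  zero_mem : ∀ Z : C, IsZero Z → Z ∈ X
  quot_mem : ∀ ⦃A B : C⦄ (f : A ⟶ B), Epi f → A ∈ X → B ∈ W → B ∈ X
  ext_mem : ∀ E : ShortComplex C, E.ShortExact → E.X₁ ∈ X → E.X₃ ∈ X → E.X₂ ∈ X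
section Aux

variable {C}

lemma torsClosure_isTorsionClass (X : Set C) : IsTorsionClass C (torsClosure C X) where
  zero_mem Z hZ := Set.mem_sInter.2 fun _ hT => hT.1.zero_mem Z hZ
  quot_mem A B f hf hA := Set.mem_sInter.2 fun T' hT =>
    hT.1.quot_mem f hf (Set.mem_sInter.1 hA T' hT)
  ext_mem E hE h1 h3 := Set.mem_sInter.2 fun T' hT =>
    hT.1.ext_mem E hE (Set.mem_sInter.1 h1 T' hT) (Set.mem_sInter.1 h3 T' hT)

lemma subset_torsClosure (X : Set C) : X ⊆ torsClosure C X :=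
  fun _ hx => Set.mem_sInter.2 fun _ hT => hT.2 hx

lemma torsClosure_subset {X T' : Set C} (h : IsTorsionClass C T') (hX : X ⊆ T') :
    torsClosure C X ⊆ T' := fun _ hx => Set.mem_sInter.1 hx T' ⟨h, hX⟩

lemma IsTorsionClass.mem_of_iso {T : Set C} (hT : IsTorsionClass C T) {X Y : C}
    (e : X ≅ Y) (hX : X ∈ T) : Y ∈ T := hT.quot_mem e.hom inferInstance hX

open CategoryTheory.Abelian CategoryTheory.Abelian.Pseudoelement
open scoped Pseudoelement

/-- Pseudoelement exactness for the kernel sequence. -/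
lemma kernel_pseudo_exact {X Y : C} (f : X ⟶ Y) (b : X) (hb : pseudoApply f b = 0) :
    ∃ a : (kernel f : C), pseudoApply (kernel.ι f) a = b := by
  have h : (ShortComplex.mk (kernel.ι f) f (kernel.condition f)).Exact :=
    ShortComplex.exact_of_f_is_kernel _ (kernelIsKernel f)
  exact Pseudoelement.pseudo_exact_of_exact h b hb

/-- Pseudoelement exactness of a short exact sequence. -/
lemma shortExact_pseudo_exact {E : ShortComplex C} (hE : E.ShortExact) (b : E.X₂)
    (hb : pseudoApply E.g b = 0) : ∃ a : E.X₁, pseudoApply E.f a = b :=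
  Pseudoelement.pseudo_exact_of_exact hE.exact b hb

/-- For an epi `g : A ⟶ B` and `f : B ⟶ S`, the induced map
`kernel (g ≫ f) ⟶ kernel f` is an epimorphism. -/
lemma epi_kernel_map_of_epi {A B S : C} (g : A ⟶ B) [Epi g] (f : B ⟶ S) :
    Epi (kernel.lift f (kernel.ι (g ≫ f) ≫ g)
      (by rw [Category.assoc, kernel.condition])) := by
  set k := kernel.lift f (kernel.ι (g ≫ f) ≫ g)
    (by rw [Category.assoc, kernel.condition]) with hk
  apply epi_of_pseudo_surjective
  intro b
  obtain ⟨a, ha⟩ := pseudo_surjective_of_epi g (pseudoApply (kernel.ι f) b)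
  have ha2 : pseudoApply (g ≫ f) a = 0 := by
    rw [Pseudoelement.comp_apply, ha, ← Pseudoelement.comp_apply, kernel.condition, Pseudoelement.zero_apply]
  obtain ⟨x, hx⟩ := kernel_pseudo_exact (g ≫ f) a ha2
  refine ⟨x, pseudo_injective_of_mono (kernel.ι f) ?_⟩
  rw [← Pseudoelement.comp_apply, hk, kernel.lift_ι, Pseudoelement.comp_apply, hx, ha]

/-- Case A kernel sequence: if `f = E.g ≫ f₃`, then
`0 ⟶ E.X₁ ⟶ kernel f ⟶ kernel f₃ ⟶ 0` is short exact. -/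
lemma shortExact_kernel_of_desc {E : ShortComplex C} (hE : E.ShortExact) {S : C}
    (f : E.X₂ ⟶ S) (f₃ : E.X₃ ⟶ S) (hf : E.g ≫ f₃ = f) :
    (ShortComplex.mk
      (kernel.lift f E.f (by rw [← hf, ← Category.assoc, E.zero, zero_comp]))
      (kernel.lift f₃ (kernel.ι f ≫ E.g)
        (by rw [Category.assoc, hf, kernel.condition]))
      (by rw [← cancel_mono (kernel.ι f₃)]; simp [E.zero])).ShortExact := by
  haveI := hE.mono_f
  haveI := hE.epi_g
  set j := kernel.lift f E.f (by rw [← hf, ← Category.assoc, E.zero, zero_comp]) with hj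
  set q := kernel.lift f₃ (kernel.ι f ≫ E.g)
    (by rw [Category.assoc, hf, kernel.condition]) with hq
  have hjι : j ≫ kernel.ι f = E.f := kernel.lift_ι _ _ _
  have hqι : q ≫ kernel.ι f₃ = kernel.ι f ≫ E.g := kernel.lift_ι _ _ _
  have hmono : Mono j := by
    have : Mono (j ≫ kernel.ι f) := by rw [hjι]; infer_instance
    exact mono_of_mono j (kernel.ι f)
  have hepi : Epi q := by
    apply epi_of_pseudo_surjective
    intro z
    obtain ⟨w, hw⟩ := pseudo_surjective_of_epi E.g (pseudoApply (kernel.ι f₃) z)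
    have hfw : pseudoApply f w = 0 := by
      rw [← hf, Pseudoelement.comp_apply, hw, ← Pseudoelement.comp_apply, kernel.condition, Pseudoelement.zero_apply]
    obtain ⟨x, hx⟩ := kernel_pseudo_exact f w hfw
    refine ⟨x, pseudo_injective_of_mono (kernel.ι f₃) ?_⟩
    rw [← Pseudoelement.comp_apply, hqι, Pseudoelement.comp_apply, hx, hw]
  have hexact : (ShortComplex.mk j q
      (by rw [← cancel_mono (kernel.ι f₃), Category.assoc, hqι, ← Category.assoc,
        hjι, E.zero, zero_comp])).Exact := by
    apply Pseudoelement.exact_of_pseudo_exact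
    intro x hx
    dsimp only [ShortComplex.mk] at x hx ⊢
    have hgx : pseudoApply E.g (pseudoApply (kernel.ι f) x) = 0 := by
      rw [← Pseudoelement.comp_apply, ← hqι, Pseudoelement.comp_apply, hx, apply_zero]
    obtain ⟨y, hy⟩ := shortExact_pseudo_exact hE _ hgx
    refine ⟨y, pseudo_injective_of_mono (kernel.ι f) ?_⟩
    rw [← Pseudoelement.comp_apply, hjι, hy]
  exact ShortComplex.ShortExact.mk' hexact hmono hepi

/-- Case B kernel sequence: if `E.f ≫ f` is epi, then
`0 ⟶ kernel (E.f ≫ f) ⟶ kernel f ⟶ E.X₃ ⟶ 0` is short exact. -/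
lemma shortExact_kernel_of_epi_comp {E : ShortComplex C} (hE : E.ShortExact) {S : C}
    (f : E.X₂ ⟶ S) [Epi (E.f ≫ f)] :
    (ShortComplex.mk
      (kernel.lift f (kernel.ι (E.f ≫ f) ≫ E.f)
        (by rw [Category.assoc, kernel.condition]))
      (kernel.ι f ≫ E.g)
      (by rw [← Category.assoc, kernel.lift_ι, Category.assoc, E.zero, comp_zero])).ShortExact := by
  haveI := hE.mono_f
  haveI := hE.epi_g
  set j := kernel.lift f (kernel.ι (E.f ≫ f) ≫ E.f)
    (by rw [Category.assoc, kernel.condition]) with hj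
  have hjι : j ≫ kernel.ι f = kernel.ι (E.f ≫ f) ≫ E.f := kernel.lift_ι _ _ _
  have hmono : Mono j := by
    have : Mono (j ≫ kernel.ι f) := by rw [hjι]; exact mono_comp _ _
    exact mono_of_mono j (kernel.ι f)
  have hepi : Epi (kernel.ι f ≫ E.g) := by
    apply epi_of_pseudo_surjective
    intro z
    obtain ⟨w, hw⟩ := pseudo_surjective_of_epi E.g z
    obtain ⟨y, hy⟩ := pseudo_surjective_of_epi (E.f ≫ f) (pseudoApply f w)
    rw [Pseudoelement.comp_apply] at hy
    obtain ⟨c, hc0, hcg⟩ := Pseudoelement.sub_of_eq_image f w (pseudoApply E.f y) hy.symm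
    have hgEf : pseudoApply E.g (pseudoApply E.f y) = 0 := by
      rw [← Pseudoelement.comp_apply, E.zero, Pseudoelement.zero_apply]
    obtain ⟨x, hx⟩ := kernel_pseudo_exact f c hc0
    refine ⟨x, ?_⟩
    rw [Pseudoelement.comp_apply, hx, hcg E.X₃ E.g hgEf, hw]
  have hexact : (ShortComplex.mk j (kernel.ι f ≫ E.g)
      (by rw [← Category.assoc, kernel.lift_ι, Category.assoc, E.zero,
        comp_zero])).Exact := by
    apply Pseudoelement.exact_of_pseudo_exact
    intro x hx
    dsimp only [ShortComplex.mk] at x hx ⊢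
    rw [Pseudoelement.comp_apply] at hx
    obtain ⟨y, hy⟩ := shortExact_pseudo_exact hE _ hx
    have hfy : pseudoApply (E.f ≫ f) y = 0 := by
      rw [Pseudoelement.comp_apply, hy, ← Pseudoelement.comp_apply, kernel.condition, Pseudoelement.zero_apply]
    obtain ⟨y', hy'⟩ := kernel_pseudo_exact (E.f ≫ f) y hfy
    refine ⟨y', pseudo_injective_of_mono (kernel.ι f) ?_⟩
    rw [← Pseudoelement.comp_apply, hjι, Pseudoelement.comp_apply, hy', hy]
  exact ShortComplex.ShortExact.mk' hexact hmono hepi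

end Aux

/-- For a torsion class `U`, a brick `S ∈ U^⊥` and `T := T(U ∪ {S})`, every morphism
`f : X → S` with `X ∈ T` is zero or epic with `ker f ∈ T`; consequently `S` is a simple
object of `W_L(T)`. -/
theorem stmt_16 [Noetherian C] [Artinian C]
    (U : Set C) (hU : IsTorsionClass C U) (S : C) (hS : IsBrick C S)
    (hperp : S ∈ RPerp C U) (T : Set C) (hT : T = torsClosure C (U ∪ {S})) :
    (∀ X ∈ T, ∀ f : X ⟶ S, (f = 0 ∨ Epi f) ∧ kernel f ∈ T) ∧
    IsSimpleIn C (WL C T) S := by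
  subst hT
  set T := torsClosure C (U ∪ {S}) with hTdef
  have hTtc : IsTorsionClass C T := torsClosure_isTorsionClass _
  -- kernel of a zero morphism
  have hker_zero : ∀ {X : C} (f : X ⟶ S), f = 0 → X ∈ T → kernel f ∈ T := by
    intro X f hf hX
    exact hTtc.mem_of_iso ((kernelIsoOfEq hf).trans kernelZeroIsoSource).symm hX
  -- the candidate torsion class
  set T' : Set C := {X | X ∈ T ∧ ∀ f : X ⟶ S, (f = 0 ∨ Epi f) ∧ kernel f ∈ T} with hT'def
  have hT'tc : IsTorsionClass C T' := by
    constructor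
    · intro Z hZ
      refine ⟨hTtc.zero_mem Z hZ, fun f => ?_⟩
      have hf : f = 0 := hZ.eq_of_src f 0
      exact ⟨Or.inl hf, hker_zero f hf (hTtc.zero_mem Z hZ)⟩
    · intro A B g hg hA
      refine ⟨hTtc.quot_mem g hg hA.1, fun f => ?_⟩
      rcases (hA.2 (g ≫ f)).1 with h0 | hepi
      · have hf : f = 0 := by
          haveI := hg
          rw [← cancel_epi g, h0, comp_zero]
        exact ⟨Or.inl hf, hker_zero f hf (hTtc.quot_mem g hg hA.1)⟩
      · haveI := hg
        haveI := hepi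
        haveI : Epi f := epi_of_epi g f
        haveI hk := epi_kernel_map_of_epi g f
        exact ⟨Or.inr inferInstance,
          hTtc.quot_mem _ hk (hA.2 (g ≫ f)).2⟩
    · intro E hE h1 h3
      have hX2 : E.X₂ ∈ T := hTtc.ext_mem E hE h1.1 h3.1
      refine ⟨hX2, fun f => ?_⟩
      haveI := hE.epi_g
      by_cases hc : E.f ≫ f = 0
      · -- f factors through E.X₃
        set f₃ := hE.exact.desc f hc with hf₃
        have hf : E.g ≫ f₃ = f := hE.exact.g_desc f hc
        rcases (h3.2 f₃).1 with h0 | hepi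
        · have hf0 : f = 0 := by rw [← hf, h0, comp_zero]
          exact ⟨Or.inl hf0, hker_zero f hf0 hX2⟩
        · haveI := hepi
          have hef : Epi f := by rw [← hf]; exact epi_comp _ _
          have hkser := shortExact_kernel_of_desc hE f f₃ hf
          exact ⟨Or.inr hef, hTtc.ext_mem _ hkser h1.1 (h3.2 f₃).2⟩
      · rcases (h1.2 (E.f ≫ f)).1 with h0 | hepi
        · exact absurd h0 hc
        · haveI := hepi
          haveI : Epi f := epi_of_epi E.f f
          have hkser := shortExact_kernel_of_epi_comp hE f
          exact ⟨Or.inr inferInstance,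
            hTtc.ext_mem _ hkser (h1.2 (E.f ≫ f)).2 h3.1⟩
  have hsub : U ∪ {S} ⊆ T' := by
    rintro x (hx | rfl)
    · have hxT : x ∈ T := subset_torsClosure _ (Or.inl hx)
      refine ⟨hxT, fun f => ?_⟩
      have hf : f = 0 := hperp x hx f
      exact ⟨Or.inl hf, hker_zero f hf hxT⟩
    · have hxT : x ∈ T := subset_torsClosure _ (Or.inr rfl)
      refine ⟨hxT, fun f => ?_⟩
      rcases hS.2 f with hf | hf
      · exact ⟨Or.inl hf, hker_zero f hf hxT⟩
      · haveI := hf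
        have hι : kernel.ι f = 0 := by
          rw [← cancel_mono f, kernel.condition, zero_comp]
        have hz : IsZero (kernel f) := by
          rw [IsZero.iff_id_eq_zero, ← cancel_mono (kernel.ι f), hι, comp_zero,
            zero_comp]
        exact ⟨Or.inr inferInstance, hTtc.zero_mem _ hz⟩
  have hTT' : T ⊆ T' := torsClosure_subset hT'tc hsub
  have first : ∀ X ∈ T, ∀ f : X ⟶ S, (f = 0 ∨ Epi f) ∧ kernel f ∈ T :=
    fun X hX f => (hTT' hX).2 f
  refine ⟨first, ?_⟩
  have hST : S ∈ T := subset_torsClosure _ (Or.inr rfl)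
  refine ⟨⟨hST, fun Y g hY => (first Y hY g).2⟩, hS.1, ?_⟩
  intro A f hA hmf
  rcases (first A hA.1 f).1 with hf | hf
  · left
    haveI := hmf
    rw [IsZero.iff_id_eq_zero, ← cancel_mono f, hf, comp_zero, zero_comp]
  · right
    haveI := hmf
    haveI := hf
    exact isIso_of_mono_of_epi f
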